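/- Suppose the formal power series T(y) = Σ_{n≥0} t(n) y^n (coefficients in the ring of formal power series in q and z) satisfies (1+yq)T(y) − T(yq) = yzq·T(yq^k) with t(0)=1, for a positive integer k. Then t(n) = (−1)^n q^n (z;q^k)_n / (q;q)_n for all n ≥ 0. -/

import Mathlib

open scoped BigOperators

/-- The variable `q` in the ring `ℚ[[q,z]]` of formal power series in two variables. -/
noncomputable def qv : MvPowerSeries (Fin 2) ℚ := MvPowerSeries.X 0

/-- The variable `z` in the ring `ℚ[[q,z]]`. -/
noncomputable def zv : MvPowerSeries (Fin 2) ℚ := MvPowerSeries.X 1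

/-- If `T(y) = Σ t(n) yⁿ` (coefficients formal power series in `q, z`) satisfies
`(1+yq)T(y) − T(yq) = yzq·T(yq^k)` and `t(0) = 1`, then
`t(n) = (−1)^n q^n (z;q^k)_n / (q;q)_n`. -/
theorem solve_q_difference_distincts (k : ℕ) (hk : 0 < k)
    (t : ℕ → MvPowerSeries (Fin 2) ℚ) (h0 : t 0 = 1)
    (hrec : (1 + PowerSeries.C (R := MvPowerSeries (Fin 2) ℚ) qv * PowerSeries.X) *
          PowerSeries.mk t -
        PowerSeries.mk (fun n => qv ^ n * t n) =
      PowerSeries.C (R := MvPowerSeries (Fin 2) ℚ) (zv * qv) * PowerSeries.X *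
        PowerSeries.mk (fun n => qv ^ (k * n) * t n)) :
    ∀ n : ℕ, t n = (-1) ^ n * qv ^ n *
      (∏ j ∈ Finset.range n, (1 - zv * qv ^ (k * j))) *
      (∏ j ∈ Finset.range n, (1 - qv ^ (j + 1)))⁻¹ := by
  -- coefficient-wise recurrence
  have key : ∀ n : ℕ, (1 - qv ^ (n + 1)) * t (n + 1)
      = -qv * (1 - zv * qv ^ (k * n)) * t n := by
    intro n
    have h := congrArg (PowerSeries.coeff (R := MvPowerSeries (Fin 2) ℚ) (n + 1)) hrec
    simp only [map_sub, add_mul, one_mul, map_add, PowerSeries.coeff_mk, mul_assoc,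
      PowerSeries.coeff_C_mul, PowerSeries.coeff_succ_X_mul] at h
    ring_nf
    ring_nf at h
    linear_combination h
  -- product form
  have main : ∀ n : ℕ, t n * (∏ j ∈ Finset.range n, (1 - qv ^ (j + 1)))
      = (-1) ^ n * qv ^ n * (∏ j ∈ Finset.range n, (1 - zv * qv ^ (k * j))) := by
    intro n
    induction n with
    | zero => simp [h0]
    | succ n ih =>
      rw [Finset.prod_range_succ, Finset.prod_range_succ]
      calc t (n + 1) * ((∏ j ∈ Finset.range n, (1 - qv ^ (j + 1))) * (1 - qv ^ (n + 1)))
          = ((1 - qv ^ (n + 1)) * t (n + 1)) * (∏ j ∈ Finset.range n, (1 - qv ^ (j + 1))) := by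
            ring
        _ = (-qv * (1 - zv * qv ^ (k * n))) * (t n * ∏ j ∈ Finset.range n, (1 - qv ^ (j + 1))) := by
            rw [key n]; ring
        _ = (-qv * (1 - zv * qv ^ (k * n))) *
              ((-1) ^ n * qv ^ n * (∏ j ∈ Finset.range n, (1 - zv * qv ^ (k * j)))) := by
            rw [ih]
        _ = _ := by ring
  intro n
  have hunit : MvPowerSeries.constantCoeff (σ := Fin 2) (R := ℚ)
      (∏ j ∈ Finset.range n, (1 - qv ^ (j + 1))) ≠ 0 := by
    rw [map_prod]
    have : ∀ j ∈ Finset.range n,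
        MvPowerSeries.constantCoeff (σ := Fin 2) (R := ℚ) (1 - qv ^ (j + 1)) = 1 := by
      intro j _
      simp [qv, map_sub, map_pow, MvPowerSeries.constantCoeff_X]
    rw [Finset.prod_congr rfl this]
    simp
  have := main n
  have hinv := MvPowerSeries.mul_inv_cancel _ hunit
  calc t n = t n * ((∏ j ∈ Finset.range n, (1 - qv ^ (j + 1))) *
        (∏ j ∈ Finset.range n, (1 - qv ^ (j + 1)))⁻¹) := by rw [hinv, mul_one]
    _ = (t n * (∏ j ∈ Finset.range n, (1 - qv ^ (j + 1)))) *
        (∏ j ∈ Finset.range n, (1 - qv ^ (j + 1)))⁻¹ := by ring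
    _ = _ := by rw [main n]
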